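/- arXiv:0803.1189 — 5 statements merged into one kernel-verified Lean document; each statement's English description precedes it below -/
import Mathlib

section
/- Let w = uvxy be a binary 7/3-power-free word with |u| = |v| = |x| = |y| = 2^n. If u and v are Morse blocks (i.e., each equal to μ^n(0) or μ^n(1), where μ is the Thue–Morse morphism 0 ↦ 01, 1 ↦ 10), then x is also a Morse block. -/
def mu (w : List Bool) : List Bool := w.flatMap (fun b => if b then [true, false] else [false, true])

def isPow (beta : ℚ) (w : List Bool) : Prop :=
  ∃ (n : ℕ) (x x' : List Bool), x ≠ [] ∧ x' <+: x ∧
    w = (List.replicate n x).flatten ++ x' ∧ beta = n + (x'.length : ℚ) / (x.length : ℚ)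

def PowFree (a : ℚ) (w : List Bool) : Prop :=
  ∀ v, v <:+: w → ∀ beta : ℚ, a ≤ beta → ¬ isPow beta v

def OverlapFree (w : List Bool) : Prop :=
  ∀ u v : List Bool, u ≠ [] → ¬ (u ++ v ++ u ++ v ++ u) <:+: w

def MorseBlock (n : ℕ) (u : List Bool) : Prop := u = mu^[n] [false] ∨ u = mu^[n] [true]

lemma mu_append (s t : List Bool) : mu (s ++ t) = mu s ++ mu t := by simp [mu]

lemma muIter_append (n : ℕ) (s t : List Bool) :
    mu^[n] (s ++ t) = mu^[n] s ++ mu^[n] t := by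
  induction n generalizing s t with
  | zero => simp
  | succ n ih => simp [Function.iterate_succ_apply, mu_append, ih]

lemma mu_single (b : Bool) : mu [b] = [b, !b] := by cases b <;> rfl

lemma muIter_succ_single (n : ℕ) (b : Bool) :
    mu^[n+1] [b] = mu^[n] [b] ++ mu^[n] [!b] := by
  rw [Function.iterate_succ_apply, mu_single]
  exact muIter_append n [b] [!b]

lemma muIter_single_length (n : ℕ) (b : Bool) : (mu^[n] [b]).length = 2 ^ n := by
  induction n generalizing b with
  | zero => simp
  | succ n ih => rw [muIter_succ_single]; simp [ih, pow_succ]; ring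

lemma mu_length (w : List Bool) : (mu w).length = 2 * w.length := by
  induction w with
  | nil => rfl
  | cons b t ih => cases b <;> simp [mu, List.flatMap_cons] at * <;> omega

lemma mu_join_replicate (k : ℕ) (x : List Bool) :
    mu (List.replicate k x).flatten = (List.replicate k (mu x)).flatten := by
  induction k with
  | zero => rfl
  | succ k ih => simp [List.replicate_succ, mu_append, ih]

lemma mu_ne_nil {x : List Bool} (hx : x ≠ []) : mu x ≠ [] := by
  intro hcon
  apply hx
  have := mu_length x
  rw [hcon] at this
  simpa using this.symm

lemma isPow_mu {beta : ℚ} {v : List Bool} (h : isPow beta v) : isPow beta (mu v) := by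
  obtain ⟨k, x, x', hx, ⟨t, ht⟩, hv, hb⟩ := h
  refine ⟨k, mu x, mu x', mu_ne_nil hx, ⟨mu t, by rw [← mu_append, ht]⟩, ?_, ?_⟩
  · rw [hv, mu_append, mu_join_replicate]
  · rw [hb, mu_length, mu_length]
    push_cast
    rw [mul_div_mul_left _ _ (by norm_num : (2:ℚ) ≠ 0)]

lemma isPow_muIter (n : ℕ) {beta : ℚ} {v : List Bool} (h : isPow beta v) :
    isPow beta (mu^[n] v) := by
  induction n with
  | zero => simpa using h
  | succ n ih => rw [Function.iterate_succ_apply']; exact isPow_mu ih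

lemma mu_infix {v w : List Bool} (h : v <:+: w) : mu v <:+: mu w := by
  obtain ⟨s, t, rfl⟩ := h
  exact ⟨mu s, mu t, by simp [mu_append]⟩

lemma muIter_infix (n : ℕ) {v w : List Bool} (h : v <:+: w) : mu^[n] v <:+: mu^[n] w := by
  induction n with
  | zero => simpa using h
  | succ n ih => rw [Function.iterate_succ_apply', Function.iterate_succ_apply']
                 exact mu_infix ih

lemma powFree_infix {a : ℚ} {w v : List Bool} (h : PowFree a w) (hv : v <:+: w) :
    PowFree a v := fun u hu => h u (hu.trans hv)

lemma morseBlock_iff (n : ℕ) (u : List Bool) : MorseBlock n u ↔ ∃ b, u = mu^[n] [b] := by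
  constructor
  · rintro (rfl | rfl)
    exacts [⟨false, rfl⟩, ⟨true, rfl⟩]
  · rintro ⟨b, rfl⟩
    cases b
    exacts [Or.inl rfl, Or.inr rfl]

lemma morseBlock_mk (n : ℕ) (b : Bool) : MorseBlock n (mu^[n] [b]) := by
  cases b
  exacts [Or.inl rfl, Or.inr rfl]

lemma muIter_nil (n : ℕ) : mu^[n] ([] : List Bool) = [] := by
  induction n with
  | zero => rfl
  | succ n ih => rw [Function.iterate_succ_apply]; exact ih

lemma muIter_flat (n : ℕ) (l : List Bool) :
    mu^[n] l = (l.map (fun b => mu^[n] [b])).flatten := by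
  induction l with
  | nil => simp [muIter_nil]
  | cons b t ih =>
    rw [show (b :: t) = [b] ++ t from rfl, muIter_append, ih]
    simp

lemma abstract7 (a c p r : Bool) :
    ∃ (f x x' : List Bool) (k : ℕ),
      f <:+: [a, !a, c, !c, p, p, r] ∧ x ≠ [] ∧ x' <+: x ∧
      f = (List.replicate k x).flatten ++ x' ∧
      (7/3 : ℚ) ≤ k + (x'.length : ℚ) / (x.length : ℚ) := by
  cases a <;> cases c <;> cases p <;> cases r
  · exact ⟨[false,false,false], [false], [], 3, by decide, by decide, by decide, by decide, by norm_num⟩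
  · exact ⟨[false,true,false,true,false], [false,true], [false], 2, by decide, by decide, by decide, by decide, by norm_num⟩
  · exact ⟨[true,true,true], [true], [], 3, by decide, by decide, by decide, by decide, by norm_num⟩
  · exact ⟨[true,true,true], [true], [], 3, by decide, by decide, by decide, by decide, by norm_num⟩
  · exact ⟨[false,false,false], [false], [], 3, by decide, by decide, by decide, by decide, by norm_num⟩
  · exact ⟨[false,false,false], [false], [], 3, by decide, by decide, by decide, by decide, by norm_num⟩
  · exact ⟨[false,true,true,false,true,true,false], [false,true,true], [false], 2, by decide, by decide, by decide, by decide, by norm_num⟩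
  · exact ⟨[true,true,true], [true], [], 3, by decide, by decide, by decide, by decide, by norm_num⟩
  · exact ⟨[false,false,false], [false], [], 3, by decide, by decide, by decide, by decide, by norm_num⟩
  · exact ⟨[true,false,false,true,false,false,true], [true,false,false], [true], 2, by decide, by decide, by decide, by decide, by norm_num⟩
  · exact ⟨[true,true,true], [true], [], 3, by decide, by decide, by decide, by decide, by norm_num⟩
  · exact ⟨[true,true,true], [true], [], 3, by decide, by decide, by decide, by decide, by norm_num⟩
  · exact ⟨[false,false,false], [false], [], 3, by decide, by decide, by decide, by decide, by norm_num⟩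
  · exact ⟨[false,false,false], [false], [], 3, by decide, by decide, by decide, by decide, by norm_num⟩
  · exact ⟨[true,false,true,false,true], [true,false], [true], 2, by decide, by decide, by decide, by decide, by norm_num⟩
  · exact ⟨[true,true,true], [true], [], 3, by decide, by decide, by decide, by decide, by norm_num⟩

theorem stmt2 (n : ℕ) (u v x y : List Bool)
    (h : PowFree (7/3) (u ++ v ++ x ++ y))
    (hu : u.length = 2 ^ n) (hv : v.length = 2 ^ n)
    (hx : x.length = 2 ^ n) (hy : y.length = 2 ^ n)
    (hub : MorseBlock n u) (hvb : MorseBlock n v) :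
    MorseBlock n x := by
  induction n generalizing u v x y with
  | zero =>
    rw [pow_zero] at hx
    obtain ⟨b, rfl⟩ := List.length_eq_one_iff.mp hx
    cases b
    · exact Or.inl rfl
    · exact Or.inr rfl
  | succ n ih =>
    obtain ⟨a, rfl⟩ := (morseBlock_iff _ _).mp hub
    obtain ⟨c, rfl⟩ := (morseBlock_iff _ _).mp hvb
    obtain ⟨x1, x2, rfl, hx1, hx2⟩ :
        ∃ x1 x2, x = x1 ++ x2 ∧ x1.length = 2 ^ n ∧ x2.length = 2 ^ n := by
      refine ⟨x.take (2^n), x.drop (2^n), (List.take_append_drop _ _).symm, ?_, ?_⟩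
      · rw [List.length_take, hx, pow_succ]; omega
      · rw [List.length_drop, hx, pow_succ]; omega
    obtain ⟨y1, y2, rfl, hy1, hy2⟩ :
        ∃ y1 y2, y = y1 ++ y2 ∧ y1.length = 2 ^ n ∧ y2.length = 2 ^ n := by
      refine ⟨y.take (2^n), y.drop (2^n), (List.take_append_drop _ _).symm, ?_, ?_⟩
      · rw [List.length_take, hy, pow_succ]; omega
      · rw [List.length_drop, hy, pow_succ]; omega
    rw [muIter_succ_single n a, muIter_succ_single n c] at h
    have hB1 : MorseBlock n x1 := by
      refine ih (mu^[n] [c]) (mu^[n] [!c]) x1 x2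
        (powFree_infix h ⟨mu^[n] [a] ++ mu^[n] [!a], y1 ++ y2, by simp [List.append_assoc]⟩)
        (muIter_single_length n c) (muIter_single_length n (!c)) hx1 hx2
        (morseBlock_mk n c) (morseBlock_mk n (!c))
    obtain ⟨p, rfl⟩ := (morseBlock_iff _ _).mp hB1
    have hB2 : MorseBlock n x2 := by
      refine ih (mu^[n] [!c]) (mu^[n] [p]) x2 y1
        (powFree_infix h ⟨mu^[n] [a] ++ mu^[n] [!a] ++ mu^[n] [c], y2, by simp [List.append_assoc]⟩)
        (muIter_single_length n (!c)) (muIter_single_length n p) hx2 hy1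
        (morseBlock_mk n (!c)) (morseBlock_mk n p)
    obtain ⟨q, rfl⟩ := (morseBlock_iff _ _).mp hB2
    by_cases hq : q = !p
    · subst hq
      rw [← muIter_succ_single]
      exact morseBlock_mk (n+1) p
    · have hq' : q = p := by cases q <;> cases p <;> simp_all
      subst hq'
      exfalso
      have hB3 : MorseBlock n y1 := by
        refine ih (mu^[n] [q]) (mu^[n] [q]) y1 y2
          (powFree_infix h ⟨mu^[n] [a] ++ mu^[n] [!a] ++ (mu^[n] [c] ++ mu^[n] [!c]), [],
            by simp [List.append_assoc]⟩)
          (muIter_single_length n q) (muIter_single_length n q) hy1 hy2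
          (morseBlock_mk n q) (morseBlock_mk n q)
      obtain ⟨r, rfl⟩ := (morseBlock_iff _ _).mp hB3
      obtain ⟨f, xx, xx', k, hinf, hne, hpre, hfe, hbeta⟩ := abstract7 a c q r
      have h2 : mu^[n] [a, !a, c, !c, q, q, r] =
          mu^[n] [a] ++ mu^[n] [!a] ++ mu^[n] [c] ++ mu^[n] [!c] ++ mu^[n] [q] ++ mu^[n] [q]
            ++ mu^[n] [r] := by
        rw [muIter_flat]
        simp [List.append_assoc]
      have h3 : mu^[n] f <:+: mu^[n] [a] ++ mu^[n] [!a] ++ (mu^[n] [c] ++ mu^[n] [!c])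
          ++ (mu^[n] [q] ++ mu^[n] [q]) ++ (mu^[n] [r] ++ y2) := by
        refine (muIter_infix n hinf).trans ?_
        rw [h2]
        exact ⟨[], y2, by simp [List.append_assoc]⟩
      exact h (mu^[n] f) h3 _ hbeta (isPow_muIter n ⟨k, xx, xx', hne, hpre, hfe, rfl⟩)
end

section
/- Let xx be a 7/3-power-free binary square with |xx| > 8. Then either xx = μ(y) for some binary word y, or xx = ā μ(y) a for some letter a ∈ {0,1} and binary word y, where ā denotes the complement of a and μ is the Thue–Morse morphism. -/
lemma getD_take_drop (w : List Bool) (a m j : ℕ) (hj : j < m) (hlen : a + m ≤ w.length) :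
    ((w.drop a).take m).getD j false = w.getD (a+j) false := by
  rw [List.getD_eq_getElem _ _ (by simp [List.length_take, List.length_drop]; omega),
      List.getD_eq_getElem _ _ (by omega)]
  simp [List.getElem_take, List.getElem_drop]

lemma seg_eq (w : List Bool) (a b m : ℕ) (ha : a + m ≤ w.length) (hb : b + m ≤ w.length)
    (h : ∀ j, j < m → w.getD (a+j) false = w.getD (b+j) false) :
    (w.drop a).take m = (w.drop b).take m := by
  apply List.ext_getElem
  · simp [List.length_take, List.length_drop]; omega
  · intro j h1 h2
    have hj : j < m := by simp [List.length_take, List.length_drop] at h1; omega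
    have := h j hj
    rw [List.getD_eq_getElem _ _ (by omega), List.getD_eq_getElem _ _ (by omega)] at this
    simpa [List.getElem_take, List.getElem_drop] using this

lemma pow73 {w : List Bool} (hw : PowFree (7/3) w) (i p n r : ℕ) (hp : 0 < p) (hr : r ≤ p)
    (hq : 7*p ≤ 3*(n*p+r)) (hlen : i + (n*p+r) ≤ w.length)
    (hper : ∀ j, j + p < n*p + r → w.getD (i+j) false = w.getD (i+j+p) false) : False := by
  have hn : 1 ≤ n := by
    rcases n with _ | n
    · simp at hq; omega
    · omega
  have claim : ∀ (n : ℕ) (i : ℕ), i + (n*p+r) ≤ w.length →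
      (∀ j, j + p < n*p + r → w.getD (i+j) false = w.getD (i+j+p) false) →
      (w.drop i).take (n*p+r) =
        (List.replicate n ((w.drop i).take p)).flatten ++ (w.drop i).take r := by
    intro n
    induction n with
    | zero => intro i h1 h2; simp
    | succ n ih =>
      intro i h1 h2
      have e1 : (n+1)*p + r = p + (n*p + r) := by ring
      rw [e1, List.take_add, List.drop_drop]
      have ih' := ih (i+p) (by omega) (by
        intro j hj
        have h := h2 (p+j) (by omega)
        rw [show i+p+j = i+(p+j) by omega]
        exact h)
      rw [ih']
      have hsegr : (w.drop (i+p)).take r = (w.drop i).take r := by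
        apply seg_eq w (i+p) i r (by omega) (by omega)
        intro j hj
        have h := h2 j (by nlinarith)
        have e2 : i + j + p = i + p + j := by omega
        rw [e2] at h
        exact h.symm
      rw [hsegr]
      rcases Nat.eq_zero_or_pos n with hn0 | hn0
      · subst hn0; simp
      · have hsegp : (w.drop (i+p)).take p = (w.drop i).take p := by
          apply seg_eq w (i+p) i p (by nlinarith) (by omega)
          intro j hj
          have h := h2 j (by nlinarith)
          have e2 : i + j + p = i + p + j := by omega
          rw [e2] at h
          exact h.symm
        rw [hsegp, List.replicate_succ]
        simp [List.append_assoc]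
  have hplen : p ≤ n*p + r := by nlinarith
  set s := w.drop i with hs
  have hslen : n*p + r ≤ s.length := by simp [hs]; omega
  set xv := s.take p with hxv
  set x'v := s.take r with hx'v
  have hxlen : xv.length = p := by simp [hxv, List.length_take]; omega
  have hx'len : x'v.length = r := by simp [hx'v, List.length_take]; omega
  have hxne : xv ≠ [] := List.ne_nil_of_length_pos (by omega)
  have hpre : x'v <+: xv := by
    have : xv.take r = x'v := by
      rw [hxv, hx'v, List.take_take, inf_eq_left.mpr hr]
    rw [← this]
    exact List.take_prefix r xv
  have hinfix : s.take (n*p+r) <:+: w := by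
    refine ⟨w.take i, w.drop (i + (n*p+r)), ?_⟩
    have e : w.drop (i + (n*p+r)) = s.drop (n*p+r) := by rw [hs, List.drop_drop]
    rw [e, List.append_assoc, List.take_append_drop, hs, List.take_append_drop]
  have hp' : (0:ℚ) < (p:ℚ) := by exact_mod_cast hp
  have h73 : (7:ℚ)/3 ≤ (n:ℚ) + (r:ℚ)/(p:ℚ) := by
    have e : (n:ℚ) + (r:ℚ)/(p:ℚ) = ((n*p+r : ℕ) : ℚ)/(p:ℚ) := by
      push_cast
      field_simp
    rw [e, le_div_iff₀ hp']
    have hq' : ((7*p:ℕ):ℚ) ≤ ((3*(n*p+r):ℕ):ℚ) := by exact_mod_cast hq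
    push_cast at hq' ⊢
    linarith
  exact hw (s.take (n*p+r)) hinfix ((n:ℚ) + (r:ℚ)/(p:ℚ)) h73
    ⟨n, xv, x'v, hxne, hpre, claim n i hlen hper, by rw [hxlen, hx'len]⟩

lemma neq_trans {a b c : Bool} (h1 : a ≠ b) (h2 : b ≠ c) : a = c := by
  revert h1 h2; cases a <;> cases b <;> cases c <;> decide

lemma bool_ne_iff {a b : Bool} (h : a ≠ b) : a = !b := by
  revert h; cases a <;> cases b <;> decide

lemma noAAA {w : List Bool} (hw : PowFree (7/3) w) (i : ℕ) (h2 : i + 3 ≤ w.length)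
    (e1 : w.getD i false = w.getD (i+1) false) (e2 : w.getD (i+1) false = w.getD (i+2) false) :
    False := by
  apply pow73 hw i 1 3 0 (by norm_num) (by norm_num) (by norm_num) (by omega)
  intro j hj
  have hj' : j ≤ 1 := by omega
  interval_cases j
  · simpa using e1
  · simpa [show i+1+1 = i+2 by omega] using e2

lemma noABABA {w : List Bool} (hw : PowFree (7/3) w) (i : ℕ) (h2 : i + 5 ≤ w.length)
    (e1 : w.getD i false ≠ w.getD (i+1) false) (e2 : w.getD (i+1) false ≠ w.getD (i+2) false)
    (e3 : w.getD (i+2) false ≠ w.getD (i+3) false) (e4 : w.getD (i+3) false ≠ w.getD (i+4) false) :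
    False := by
  apply pow73 hw i 2 2 1 (by norm_num) (by norm_num) (by norm_num) (by omega)
  intro j hj
  have hj' : j ≤ 2 := by omega
  interval_cases j
  · simpa [show i+0+2 = i+2 by omega] using neq_trans e1 e2
  · simpa [show i+1+2 = i+3 by omega] using neq_trans e2 e3
  · simpa [show i+2+2 = i+4 by omega] using neq_trans e3 e4

lemma noAABAA {w : List Bool} (hw : PowFree (7/3) w) (i : ℕ) (h2 : i + 7 ≤ w.length)
    (e1 : w.getD (i+1) false = w.getD (i+2) false) (e2 : w.getD (i+2) false ≠ w.getD (i+3) false)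
    (e3 : w.getD (i+3) false ≠ w.getD (i+4) false) (e4 : w.getD (i+4) false = w.getD (i+5) false) :
    False := by
  by_cases hc : w.getD i false = w.getD (i+1) false
  · exact noAAA hw i (by omega) hc e1
  by_cases hd : w.getD (i+5) false = w.getD (i+6) false
  · exact noAAA hw (i+4) (by omega) (by simpa [show i+4+1 = i+5 by omega] using e4)
      (by simpa [show i+4+1 = i+5 by omega, show i+4+2 = i+6 by omega] using hd)
  apply pow73 hw i 3 2 1 (by norm_num) (by norm_num) (by norm_num) (by omega)
  intro j hj
  have hj' : j ≤ 3 := by omega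
  interval_cases j
  · have : w.getD (i+1) false ≠ w.getD (i+3) false := e1 ▸ e2
    simpa [show i+0+3 = i+3 by omega] using neq_trans hc this
  · have h24 : w.getD (i+2) false = w.getD (i+4) false := neq_trans e2 e3
    simpa [show i+1+3 = i+4 by omega] using e1.trans h24
  · have h24 : w.getD (i+2) false = w.getD (i+4) false := neq_trans e2 e3
    simpa [show i+2+3 = i+5 by omega] using h24.trans e4
  · have h46 : w.getD (i+4) false ≠ w.getD (i+6) false := e4 ▸ hd
    simpa [show i+3+3 = i+6 by omega] using neq_trans e3 h46

lemma pairParity {w : List Bool} (hw : PowFree (7/3) w) :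
    ∀ (d i j : ℕ), j - i = d → 1 ≤ i → i ≤ j → j + 3 ≤ w.length →
    w.getD i false = w.getD (i+1) false → w.getD j false = w.getD (j+1) false →
    i % 2 = j % 2 := by
  intro d
  induction d using Nat.strong_induction_on with
  | _ d ih =>
    intro i j hd h1 hij hj hpi hpj
    by_cases hk : ∃ k, i < k ∧ k < j ∧ w.getD k false = w.getD (k+1) false
    · obtain ⟨k, hk1, hk2, hk3⟩ := hk
      have e1 := ih (k-i) (by omega) i k rfl (by omega) (by omega) (by omega) hpi hk3
      have e2 := ih (j-k) (by omega) k j rfl (by omega) (by omega) hj hk3 hpj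
      omega
    · push_neg at hk
      by_cases hpar : (j - i) % 2 = 0
      · omega
      · -- odd gap
        rcases (show j = i + 1 ∨ j = i + 3 ∨ j ≥ i + 5 by omega) with h | h | h
        · subst h
          exact absurd (noAAA hw i (by omega) hpi (by simpa [show i+1+1 = i+2 by omega] using hpj)) id
        · subst h
          obtain ⟨i', rfl⟩ : ∃ i', i = i' + 1 := ⟨i - 1, by omega⟩
          exact absurd (noAABAA hw i' (by omega)
            (by simpa [show i'+1+1 = i'+2 by omega] using hpi)
            (by simpa [show i'+1+1 = i'+2 by omega] using hk (i'+2) (by omega) (by omega))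
            (by simpa [show i'+3+1 = i'+4 by omega] using hk (i'+3) (by omega) (by omega))
            (by simpa [show i'+1+3 = i'+4 by omega, show i'+1+3+1 = i'+5 by omega] using hpj)) id
        · refine absurd (noABABA hw (i+1) (by omega) ?_ ?_ ?_ ?_) id
          · simpa [show i+1+1 = i+2 by omega] using hk (i+1) (by omega) (by omega)
          · simpa [show i+1+1 = i+2 by omega, show i+1+2 = i+3 by omega] using
              hk (i+2) (by omega) (by omega)
          · simpa [show i+1+2 = i+3 by omega, show i+1+3 = i+4 by omega] using
              hk (i+3) (by omega) (by omega)
          · simpa [show i+1+3 = i+4 by omega, show i+1+4 = i+5 by omega] using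
              hk (i+4) (by omega) (by omega)

def chk (w : List Bool) (i p n r : ℕ) : Bool :=
  decide (0 < p) && decide (r ≤ p) && decide (7*p ≤ 3*(n*p+r)) &&
  decide (i + (n*p+r) ≤ w.length) &&
  (List.range (n*p+r)).all
    (fun j => decide (n*p+r ≤ j + p) || decide (w.getD (i+j) false = w.getD (i+j+p) false))

lemma chk_sound {w : List Bool} (hw : PowFree (7/3) w) (i p n r : ℕ)
    (h : chk w i p n r = true) : False := by
  unfold chk at h
  simp only [Bool.and_eq_true, decide_eq_true_eq, List.all_eq_true, List.mem_range,
    Bool.or_eq_true] at h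
  obtain ⟨⟨⟨⟨h1, h2⟩, h3⟩, h4⟩, h5⟩ := h
  apply pow73 hw i p n r h1 h2 h3 h4
  intro j hj
  rcases h5 j (by omega) with h | h
  · omega
  · exact h

lemma mu_cons (a : Bool) (y : List Bool) : mu (a :: y) = a :: (!a) :: mu y := by
  cases a <;> simp [mu]

lemma mu_of_alt : ∀ (k : ℕ) (w : List Bool), w.length ≤ k → w.length % 2 = 0 →
    (∀ i, 2*i+1 < w.length → w.getD (2*i) false ≠ w.getD (2*i+1) false) →
    ∃ y, w = mu y := by
  intro k
  induction k with
  | zero =>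
    intro w hk _ _
    have : w = [] := List.eq_nil_of_length_eq_zero (by omega)
    subst this
    exact ⟨[], by simp [mu]⟩
  | succ k ih =>
    intro w hk heven halt
    rcases w with _ | ⟨a, w⟩
    · exact ⟨[], by simp [mu]⟩
    rcases w with _ | ⟨b, t⟩
    · simp at heven
    have h0 : a ≠ b := by
      have := halt 0 (by simp only [List.length_cons]; omega)
      simpa using this
    have hb : b = !a := by revert h0; cases a <;> cases b <;> decide
    obtain ⟨y, hy⟩ := ih t (by simp only [List.length_cons] at hk ⊢; omega)
      (by simp only [List.length_cons] at heven ⊢; omega) (by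
      intro i hi
      have := halt (i+1) (by simp only [List.length_cons] at hi ⊢; omega)
      rw [show 2*(i+1) = 2*i+1+1 from by omega] at this
      simpa using this)
    refine ⟨a :: y, ?_⟩
    rw [mu_cons, ← hy, hb]

lemma list_decomp (w : List Bool) (h2 : 2 ≤ w.length) :
    w = w.getD 0 false :: ((w.drop 1).take (w.length - 2) ++ [w.getD (w.length - 1) false]) := by
  rcases w with _ | ⟨a, t⟩
  · simp at h2
  have hlt : 0 < t.length := by
    simp only [List.length_cons] at h2
    omega
  obtain ⟨m, hm⟩ : ∃ m, t.length = m + 1 := ⟨t.length - 1, by omega⟩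
  have e1 : (a :: t).drop 1 = t := rfl
  have e2 : (a :: t).length - 2 = t.length - 1 := by simp
  have e3 : (a :: t).getD 0 false = a := rfl
  have e4 : (a :: t).getD ((a :: t).length - 1) false = t.getD (t.length - 1) false := by
    rw [show (a :: t).length - 1 = t.length from by simp, hm]
    simp [List.getD_cons_succ]
  rw [e1, e2, e3, e4]
  have hdrop : t.drop (t.length - 1) = [t.getD (t.length - 1) false] := by
    apply List.ext_getElem
    · simp [List.length_drop]
      omega
    · intro n h1 h2'
      simp only [List.length_drop] at h1
      have hn : n = 0 := by omega
      subst hn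
      rw [List.getD_eq_getElem _ _ (by omega)]
      simp [List.getElem_drop]
  congr 1
  conv_lhs => rw [← List.take_append_drop (t.length - 1) t]
  rw [hdrop]

theorem stmt4 (x : List Bool) (h : PowFree (7/3) (x ++ x)) (hl : 8 < (x ++ x).length) :
    (∃ y, x ++ x = mu y) ∨ (∃ (a : Bool) (y : List Bool), x ++ x = (!a) :: (mu y ++ [a])) := by
  have hWlen : (x ++ x).length = 2 * x.length := by simp [two_mul]
  set n := x.length with hn
  have hn5 : 5 ≤ n := by omega
  have hper : ∀ i, i < n → (x ++ x).getD i false = (x ++ x).getD (i + n) false := by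
    intro i hi
    rw [List.getD_append _ _ _ _ (by omega), List.getD_append_right _ _ _ _ (by omega)]
    congr 1
    omega
  by_cases h5 : n = 5
  · exfalso
    have hx5 : x.length = 5 := by omega
    obtain ⟨a, b, c, d, e, hx⟩ : ∃ a b c d e, x = [a, b, c, d, e] := by
      rcases x with _ | ⟨a, x⟩
      · simp at hx5
      rcases x with _ | ⟨b, x⟩
      · simp at hx5
      rcases x with _ | ⟨c, x⟩
      · simp only [List.length_cons, List.length_nil] at hx5; omega
      rcases x with _ | ⟨d, x⟩
      · simp only [List.length_cons, List.length_nil] at hx5; omega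
      rcases x with _ | ⟨e, x⟩
      · simp only [List.length_cons, List.length_nil] at hx5; omega
      rcases x with _ | ⟨f, x⟩
      · exact ⟨a, b, c, d, e, rfl⟩
      · simp only [List.length_cons] at hx5; omega
    subst hx
    rcases a <;> rcases b <;> rcases c <;> rcases d <;> rcases e <;>
      first
        | exact chk_sound h 0 1 2 1 (by decide)
        | exact chk_sound h 1 1 2 1 (by decide)
        | exact chk_sound h 2 1 2 1 (by decide)
        | exact chk_sound h 3 1 2 1 (by decide)
        | exact chk_sound h 4 1 2 1 (by decide)
        | exact chk_sound h 0 2 2 1 (by decide)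
        | exact chk_sound h 1 2 2 1 (by decide)
        | exact chk_sound h 2 2 2 1 (by decide)
        | exact chk_sound h 3 2 2 1 (by decide)
        | exact chk_sound h 4 2 2 1 (by decide)
  have hn6 : 6 ≤ n := by omega
  obtain ⟨k0, hk01, hk04, hk0p⟩ :
      ∃ k, 1 ≤ k ∧ k ≤ 4 ∧ (x++x).getD k false = (x++x).getD (k+1) false := by
    by_contra hc
    push_neg at hc
    exact noABABA h 1 (by omega) (hc 1 (by norm_num) (by norm_num))
      (hc 2 (by norm_num) (by norm_num)) (hc 3 (by norm_num) (by norm_num))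
      (hc 4 (by norm_num) (by norm_num))
  have hneven : n % 2 = 0 := by
    by_contra hodd
    have h7 : 7 ≤ n := by omega
    have hkp2 : (x++x).getD (k0+n) false = (x++x).getD (k0+n+1) false := by
      rw [← hper k0 (by omega), show k0+n+1 = (k0+1)+n from by omega, ← hper (k0+1) (by omega)]
      exact hk0p
    have := pairParity h (k0+n-k0) k0 (k0+n) rfl hk01 (by omega) (by omega) hk0p hkp2
    omega
  have hAll : ∀ i, i + 2 ≤ 2*n → (x++x).getD i false = (x++x).getD (i+1) false →
      i % 2 = k0 % 2 := by
    intro i hi hp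
    rcases (show (1 ≤ i ∧ i + 3 ≤ 2*n) ∨ i = 0 ∨ i = 2*n - 2 from by omega) with
      ⟨hi1, hi3⟩ | h0 | hend
    · rcases le_total i k0 with hle | hle
      · exact pairParity h (k0-i) i k0 rfl hi1 hle (by omega) hp hk0p
      · exact (pairParity h (i-k0) k0 i rfl hk01 hle (by omega) hk0p hp).symm
    · subst h0
      have e0 : (x++x).getD 0 false = (x++x).getD (0+n) false := hper 0 (by omega)
      have e1 : (x++x).getD 1 false = (x++x).getD (1+n) false := hper 1 (by omega)
      have hpn : (x++x).getD (0+n) false = (x++x).getD ((0+n)+1) false := by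
        rw [← e0, show (0+n)+1 = 1+n from by omega, ← e1]
        exact hp
      have := pairParity h ((0+n)-k0) k0 (0+n) rfl hk01 (by omega) (by omega) hk0p hpn
      omega
    · subst hend
      have e0 : (x++x).getD (n-2) false = (x++x).getD ((n-2)+n) false := hper (n-2) (by omega)
      have e1 : (x++x).getD (n-1) false = (x++x).getD ((n-1)+n) false := hper (n-1) (by omega)
      have hpn : (x++x).getD (n-2) false = (x++x).getD ((n-2)+1) false := by
        rw [e0, show (n-2)+n = 2*n-2 from by omega, show (n-2)+1 = n-1 from by omega, e1,
          show (n-1)+n = (2*n-2)+1 from by omega]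
        exact hp
      have := pairParity h ((n-2)-k0) k0 (n-2) rfl hk01 (by omega) (by omega) hk0p hpn
      omega
  rcases Nat.mod_two_eq_zero_or_one k0 with hk0e | hk0e
  · -- all pairs at even positions: form 2
    right
    have hends : (x++x).getD 0 false ≠ (x++x).getD (2*n-1) false := by
      intro hc
      have e0 : (x++x).getD 0 false = (x++x).getD (0+n) false := hper 0 (by omega)
      have e1 : (x++x).getD (n-1) false = (x++x).getD ((n-1)+n) false := hper (n-1) (by omega)
      have hpn : (x++x).getD (n-1) false = (x++x).getD ((n-1)+1) false := by
        rw [show (n-1)+1 = 0+n from by omega, ← e0, e1, show (n-1)+n = 2*n-1 from by omega]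
        exact hc.symm
      have := hAll (n-1) (by omega) hpn
      omega
    have hugets : ∀ j, j < 2*n-2 →
        (((x++x).drop 1).take ((x++x).length - 2)).getD j false = (x++x).getD (1+j) false := by
      intro j hj
      exact getD_take_drop (x++x) 1 ((x++x).length - 2) j (by omega) (by omega)
    have hulen : (((x++x).drop 1).take ((x++x).length - 2)).length = 2*n-2 := by
      simp only [List.length_take, List.length_drop]
      omega
    have halt : ∀ i, 2*i+1 < (((x++x).drop 1).take ((x++x).length - 2)).length →
        (((x++x).drop 1).take ((x++x).length - 2)).getD (2*i) false ≠
        (((x++x).drop 1).take ((x++x).length - 2)).getD (2*i+1) false := by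
      intro i hi hc
      rw [hulen] at hi
      rw [hugets _ (by omega), hugets _ (by omega),
        show 1+(2*i+1) = (1+2*i)+1 from by omega] at hc
      have := hAll (1+2*i) (by omega) hc
      omega
    obtain ⟨y, hy⟩ := mu_of_alt (((x++x).drop 1).take ((x++x).length - 2)).length
      (((x++x).drop 1).take ((x++x).length - 2)) le_rfl (by rw [hulen]; omega) halt
    refine ⟨(x++x).getD (2*n-1) false, y, ?_⟩
    have hdec := list_decomp (x++x) (by omega)
    conv_lhs => rw [hdec]
    rw [show (x++x).length - 1 = 2*n - 1 from by omega, ← hy, bool_ne_iff hends]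
  · -- all pairs at odd positions: form 1
    left
    have halt : ∀ i, 2*i+1 < (x++x).length →
        (x++x).getD (2*i) false ≠ (x++x).getD (2*i+1) false := by
      intro i hi hc
      have := hAll (2*i) (by omega) hc
      omega
    exact mu_of_alt (x++x).length (x++x) le_rfl (by omega) halt
end

section
/- Every infinite overlap-free binary word has a position i at which no square begins. -/
def seg (w : ℕ → Bool) (i n : ℕ) : List Bool := (List.range n).map (fun j => w (i + j))

def FactorOf (v : List Bool) (w : ℕ → Bool) : Prop := ∃ i, v = seg w i v.length

def PowFreeInf (a : ℚ) (w : ℕ → Bool) : Prop :=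
  ∀ v, FactorOf v w → ∀ beta : ℚ, a ≤ beta → ¬ isPow beta v

def OverlapFreeInf (w : ℕ → Bool) : Prop :=
  ∀ u v : List Bool, u ≠ [] → ¬ FactorOf (u ++ v ++ u ++ v ++ u) w

def SqLenAt (w : ℕ → Bool) (i m : ℕ) : Prop := ∀ j < m, w (i + j) = w (i + m + j)

def SqAt (w : ℕ → Bool) (i : ℕ) : Prop := ∃ m, 0 < m ∧ SqLenAt w i m


lemma eqnot {x y : Bool} (h : ¬ x = y) : x = !y := by cases x <;> cases y <;> simp_all
lemma eqnot' {x y : Bool} (h : ¬ x = y) : y = !x := by cases x <;> cases y <;> simp_all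
lemma noteq {x y : Bool} (h : ¬ x = !y) : x = y := by cases x <;> cases y <;> simp_all


section
variable {w : ℕ → Bool}

lemma seg_add (i m n : ℕ) : seg w i (m + n) = seg w i m ++ seg w (i + m) n := by
  unfold seg
  rw [List.range_add, List.map_append, List.map_map]
  congr 1
  apply List.map_congr_left
  intro a _
  simp [Nat.add_assoc]

lemma seg_congr (i i' n : ℕ) (h : ∀ t < n, w (i + t) = w (i' + t)) :
    seg w i n = seg w i' n := by
  unfold seg
  exact List.map_congr_left (fun a ha => h a (List.mem_range.mp ha))

lemma seg_one (i : ℕ) : seg w i 1 = [w i] := by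
  simp [seg, List.range_succ]

lemma OV (hof : OverlapFreeInf w) (i p : ℕ) (hp : 0 < p)
    (h : ∀ t ≤ p, w (i + t) = w (i + p + t)) : False := by
  have hX : seg w (i + p) p = seg w i p :=
    seg_congr _ _ _ (fun t ht => (h t ht.le).symm)
  have h1 : w (i + p + p) = w i := by
    have := h p le_rfl
    have h0 := h 0 (Nat.zero_le _)
    simp only [Nat.add_zero] at h0
    rw [← this, ← h0]
  have hone : seg w (i + p + p) 1 = [w i] := by rw [seg_one, h1]
  have hsplit : seg w i p = [w i] ++ seg w (i + 1) (p - 1) := by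
    have hp1 : p = 1 + (p - 1) := by omega
    rw [hp1, seg_add, seg_one]
    congr 2 <;> omega
  have key : seg w i (p + (p + 1)) =
      ([w i] ++ seg w (i+1) (p-1)) ++ (([w i] ++ seg w (i+1) (p-1)) ++ [w i]) := by
    rw [seg_add, seg_add, hX, hone, hsplit]
  refine hof [w i] (seg w (i+1) (p-1)) (by simp) ⟨i, ?_⟩
  have hlen : ([w i] ++ seg w (i+1) (p-1) ++ [w i] ++ seg w (i+1) (p-1) ++ [w i]).length
      = p + (p + 1) := by
    simp [seg]
    omega
  rw [hlen, key]
  simp [List.append_assoc]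

lemma no_cube (hof : OverlapFreeInf w) (i : ℕ)
    (h1 : w i = w (i+1)) (h2 : w (i+1) = w (i+2)) : False := by
  refine OV hof i 1 one_pos ?_
  intro t ht
  interval_cases t
  · exact h1
  · exact h2

lemma window (hof : OverlapFreeInf w) (k : ℕ) :
    ∃ j, k ≤ j ∧ j ≤ k + 3 ∧ w j = w (j+1) := by
  by_contra hc
  push_neg at hc
  have e0 : w (k+1) = !w k := eqnot' (hc k le_rfl (by omega))
  have e1 : w (k+2) = !w (k+1) := eqnot' (hc (k+1) (by omega) (by omega))
  have e2 : w (k+3) = !w (k+2) := eqnot' (hc (k+2) (by omega) (by omega))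
  have e3 : w (k+4) = !w (k+3) := eqnot' (hc (k+3) (by omega) (by omega))
  refine OV hof k 2 two_pos ?_
  intro t ht
  interval_cases t
  · show w k = w (k+2); rw [e1, e0]; simp
  · show w (k+1) = w (k+3); rw [e2, e1]; simp
  · show w (k+2) = w (k+4); rw [e3, e2]; simp

lemma no_gap3 (hof : OverlapFreeInf w) (i : ℕ) (hi : 2 ≤ i)
    (d1 : w i = w (i+1)) (d2 : w (i+3) = w (i+4)) : False := by
  obtain ⟨m, rfl⟩ : ∃ m, i = m + 2 := ⟨i - 2, by omega⟩
  -- positions m .. ; a := w (m+2); d1 : w (m+2) = w (m+3), d2 : w (m+5) = w (m+6)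
  have h3 : w (m+3) = w (m+2) := d1.symm
  have h4 : w (m+4) = !w (m+2) := by
    by_contra hc
    exact no_cube hof (m+2) d1 (by rw [h3, noteq hc])
  have h5 : w (m+5) = w (m+2) := by
    by_contra hc
    refine no_cube hof (m+4) ?_ d2
    show w (m+4) = w (m+5)
    rw [h4, eqnot hc]
  have h6 : w (m+6) = w (m+2) := by rw [← d2, h5]
  have h1 : w (m+1) = !w (m+2) := by
    by_contra hc
    exact no_cube hof (m+1) (noteq hc) d1
  have h0 : w m = !w (m+2) := by
    by_contra hc
    refine OV hof m 3 (by omega) ?_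
    intro t ht
    interval_cases t
    · show w m = w (m+3); rw [noteq hc, h3]
    · show w (m+1) = w (m+4); rw [h1, h4]
    · show w (m+2) = w (m+5); rw [h5]
    · show w (m+3) = w (m+6); rw [h3, h6]
  by_cases h7 : w (m+7) = w (m+2)
  · exact no_cube hof (m+5) (by rw [h5, h6]) (by rw [h6, h7])
  · refine OV hof (m+1) 3 (by omega) ?_
    intro t ht
    interval_cases t
    · show w (m+1) = w (m+4); rw [h1, h4]
    · show w (m+2) = w (m+5); rw [h5]
    · show w (m+3) = w (m+6); rw [h3, h6]
    · show w (m+4) = w (m+7); rw [h4, eqnot h7]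

lemma same_par (hof : OverlapFreeInf w) :
    ∀ g j1 j2, 2 ≤ j1 → j1 < j2 → j2 - j1 ≤ g →
      w j1 = w (j1+1) → w j2 = w (j2+1) → j1 % 2 = j2 % 2 := by
  intro g
  induction g with
  | zero => intro j1 j2 _ h2 h3 _ _; omega
  | succ n ih =>
    intro j1 j2 hj1 hlt hle d1 d2
    by_cases hg : j2 - j1 ≤ 4
    · have : j2 = j1 + 1 ∨ j2 = j1 + 2 ∨ j2 = j1 + 3 ∨ j2 = j1 + 4 := by omega
      rcases this with rfl | rfl | rfl | rfl
      · exact absurd (no_cube hof j1 d1 d2) (by simp)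
      · omega
      · exact absurd (no_gap3 hof j1 hj1 d1 d2) (by simp)
      · omega
    · obtain ⟨j3, hj3a, hj3b, d3⟩ := window hof (j1 + 1)
      have e1 : j1 % 2 = j3 % 2 :=
        ih j1 j3 hj1 (by omega) (by omega) d1 d3
      have e2 : j3 % 2 = j2 % 2 :=
        ih j3 j2 (by omega) (by omega) (by omega) d3 d2
      omega

lemma blocks (hof : OverlapFreeInf w) :
    ∃ r < 2, ∀ q, 2 ≤ q → q % 2 ≠ r → w q ≠ w (q+1) := by
  obtain ⟨d0, hd0a, _, dd0⟩ := window hof 2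
  refine ⟨d0 % 2, by omega, ?_⟩
  intro q hq hqr hdq
  rcases lt_trichotomy q d0 with h | rfl | h
  · exact hqr (same_par hof (d0 - q) q d0 hq h le_rfl hdq dd0)
  · exact hqr rfl
  · exact hqr (same_par hof (q - d0) d0 q (by omega) h le_rfl dd0 hdq).symm

end

section
variable {w : ℕ → Bool}

lemma evensq (hof : OverlapFreeInf w) (r : ℕ) (hr2 : r < 2)
    (hB : ∀ q, 2 ≤ q → q % 2 ≠ r → w q ≠ w (q+1))
    (j p : ℕ) (hp : 0 < p) (hpe : p % 2 = 0) (hj : 3 ≤ j) (hjr : j % 2 = r)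
    (hs : SqLenAt w j p) : False := by
  obtain ⟨m, rfl⟩ : ∃ m, j = m + 1 := ⟨j - 1, by omega⟩
  have bm : w m ≠ w (m+1) := hB m (by omega) (by omega)
  have bp : w (m+p) ≠ w (m+p+1) := hB (m+p) (by omega) (by omega)
  refine OV hof m p hp ?_
  intro t ht
  obtain _ | s := t
  · have s0 : w (m+1) = w (m+1+p) := hs 0 hp
    have e : m+1+p = m+p+1 := by omega
    rw [e] at s0
    show w m = w (m + p)
    rw [eqnot bm, eqnot bp, s0]
  · have e1 : m + (s+1) = m+1+s := by omega
    have e2 : m + p + (s+1) = m+1+p+s := by omega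
    rw [e1, e2]
    exact hs s (by omega)

lemma oddsq5 (hof : OverlapFreeInf w) (r : ℕ) (hr2 : r < 2)
    (hB : ∀ q, 2 ≤ q → q % 2 ≠ r → w q ≠ w (q+1))
    (j p : ℕ) (hp : 5 ≤ p) (hpe : p % 2 = 1) (hj : 3 ≤ j) (hjr : j % 2 = r)
    (hs : SqLenAt w j p) : False := by
  have A : ∀ s, s ≤ 3 → w (j + s + 1) = !w (j + s) := by
    intro s hs3
    by_cases hpar : (j + s) % 2 = r
    · have b : w (j+p+s) ≠ w (j+p+s+1) := hB (j+p+s) (by omega) (by omega)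
      have s1 : w (j+s) = w (j+p+s) := hs s (by omega)
      have s2 : w (j+s+1) = w (j+p+(s+1)) := hs (s+1) (by omega)
      have e : j + p + (s+1) = j+p+s+1 := by omega
      rw [s2, e, eqnot' b, ← s1]
    · have b : w (j+s) ≠ w (j+s+1) := hB (j+s) (by omega) hpar
      exact eqnot' b
  have A0 : w (j+1) = !w j := by have := A 0 (by omega); simpa using this
  have A1 : w (j+2) = !w (j+1) := A 1 (by omega)
  have A2 : w (j+3) = !w (j+2) := A 2 (by omega)
  have A3 : w (j+4) = !w (j+3) := A 3 (by omega)
  refine OV hof j 2 two_pos ?_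
  intro t ht
  interval_cases t
  · show w j = w (j+2); rw [A1, A0, Bool.not_not]
  · show w (j+1) = w (j+3); rw [A2, A1, Bool.not_not]
  · show w (j+2) = w (j+4); rw [A3, A2, Bool.not_not]

lemma sq3 (r : ℕ) (hr2 : r < 2)
    (hB : ∀ q, 2 ≤ q → q % 2 ≠ r → w q ≠ w (q+1))
    (j : ℕ) (hj : 3 ≤ j) (hjr : j % 2 = r) (hs : SqLenAt w j 3) :
    w (j+3) = w j ∧ w (j+5) = w j := by
  have B1 : w (j+1) ≠ w (j+2) := hB (j+1) (by omega) (by omega)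
  have B3 : w (j+3) ≠ w (j+4) := hB (j+3) (by omega) (by omega)
  have S0 : w j = w (j+3) := hs 0 (by omega)
  have S1 : w (j+1) = w (j+4) := hs 1 (by omega)
  have S2 : w (j+2) = w (j+5) := hs 2 (by omega)
  refine ⟨S0.symm, ?_⟩
  rw [← S2, eqnot' B1, S1, eqnot' B3, ← S0, Bool.not_not]

lemma prop3 (hof : OverlapFreeInf w) (hc : ∀ i, SqAt w i) (r : ℕ) (hr2 : r < 2)
    (hB : ∀ q, 2 ≤ q → q % 2 ≠ r → w q ≠ w (q+1))
    (i : ℕ) (hi : 4 ≤ i) (hir : i % 2 ≠ r) (hd : w i = w (i+2)) :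
    w (i+4) = !w i ∧ w (i+6) = !w i := by
  obtain ⟨p, hp, hs⟩ := hc (i+1)
  have Bi : w i ≠ w (i+1) := hB i (by omega) hir
  have e1 : w (i+1) = !w i := eqnot' Bi
  by_cases hpe : p % 2 = 0
  · exact absurd (evensq hof r hr2 hB (i+1) p hp hpe (by omega) (by omega) hs) (by simp)
  · have hcase : p = 1 ∨ p = 3 ∨ 5 ≤ p := by omega
    rcases hcase with rfl | rfl | h5
    · have s0 : w (i+1) = w (i+2) := hs 0 (by omega)
      have : (!w i) = w i := by rw [← e1, s0, ← hd]
      simp at this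
    · have g := sq3 r hr2 hB (i+1) (by omega) (by omega) hs
      have g1 : w (i+4) = w (i+1) := g.1
      have g2 : w (i+6) = w (i+1) := g.2
      rw [e1] at g1 g2
      exact ⟨g1, g2⟩
    · exact absurd (oddsq5 hof r hr2 hB (i+1) p h5 (by omega) (by omega) (by omega) hs)
        (by simp)
end

theorem stmt6 (w : ℕ → Bool) (h : OverlapFreeInf w) : ∃ i, ¬ SqAt w i := by
  by_contra hcon
  push_neg at hcon
  obtain ⟨r, hr2, hB⟩ := blocks h
  -- find a starting "z-double": i1 ≥ 4, i1 % 2 ≠ r, w i1 = w (i1+2)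
  obtain ⟨i0, hi04, hi0r⟩ : ∃ i0, 4 ≤ i0 ∧ i0 % 2 ≠ r := ⟨5 - r, by omega⟩
  have b0 : w (i0+1) = !w i0 := eqnot' (hB i0 (by omega) hi0r)
  have b1 : w (i0+3) = !w (i0+2) := eqnot' (hB (i0+2) (by omega) (by omega))
  have b2 : w (i0+5) = !w (i0+4) := eqnot' (hB (i0+4) (by omega) (by omega))
  have b3 : w (i0+7) = !w (i0+6) := eqnot' (hB (i0+6) (by omega) (by omega))
  obtain ⟨i1, h4, hparity, hd⟩ : ∃ i1, 4 ≤ i1 ∧ i1 % 2 ≠ r ∧ w i1 = w (i1+2) := by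
    by_cases c0 : w i0 = w (i0+2)
    · exact ⟨i0, hi04, hi0r, c0⟩
    by_cases c1 : w (i0+2) = w (i0+4)
    · exact ⟨i0+2, by omega, by omega, c1⟩
    by_cases c2 : w (i0+4) = w (i0+6)
    · exact ⟨i0+4, by omega, by omega, c2⟩
    by_cases c3 : w (i0+6) = w (i0+8)
    · exact ⟨i0+6, by omega, by omega, c3⟩
    exfalso
    have e1 : w (i0+2) = !w i0 := eqnot' c0
    have e2 : w (i0+4) = !w (i0+2) := eqnot' c1
    have e3 : w (i0+6) = !w (i0+4) := eqnot' c2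
    have e4 : w (i0+8) = !w (i0+6) := eqnot' c3
    refine OV h i0 4 (by omega) ?_
    intro t ht
    interval_cases t
    · show w i0 = w (i0+4); rw [e2, e1, Bool.not_not]
    · show w (i0+1) = w (i0+5); rw [b0, b2, e2, e1]; simp
    · show w (i0+2) = w (i0+6); rw [e3, e2]; simp
    · show w (i0+3) = w (i0+7); rw [b1, b3, e3, e2]; simp
    · show w (i0+4) = w (i0+8); rw [e4, e3]; simp
  have L2 : w (i1+2) = w i1 := hd.symm
  have P0 := prop3 h hcon r hr2 hB i1 h4 hparity hd
  have L4 : w (i1+4) = !w i1 := P0.1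
  have L6 : w (i1+6) = !w i1 := P0.2
  have P1 := prop3 h hcon r hr2 hB (i1+4) (by omega) (by omega) (by rw [L4, L6])
  have L8 : w (i1+8) = w i1 := by
    have t : w (i1+8) = !w (i1+4) := P1.1
    rw [L4] at t; simpa using t
  have L10 : w (i1+10) = w i1 := by
    have t : w (i1+10) = !w (i1+4) := P1.2
    rw [L4] at t; simpa using t
  have P2 := prop3 h hcon r hr2 hB (i1+8) (by omega) (by omega) (by rw [L8, L10])
  have L12 : w (i1+12) = !w i1 := by
    have t : w (i1+12) = !w (i1+8) := P2.1
    rw [L8] at t; exact t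
  have L14 : w (i1+14) = !w i1 := by
    have t : w (i1+14) = !w (i1+8) := P2.2
    rw [L8] at t; exact t
  have P3 := prop3 h hcon r hr2 hB (i1+12) (by omega) (by omega) (by rw [L12, L14])
  have L16 : w (i1+16) = w i1 := by
    have t : w (i1+16) = !w (i1+12) := P3.1
    rw [L12] at t; simpa using t
  have O1 : w (i1+1) = !w i1 := eqnot' (hB i1 (by omega) hparity)
  have O3 : w (i1+3) = !w i1 := by
    have t : w (i1+3) = !w (i1+2) := eqnot' (hB (i1+2) (by omega) (by omega))
    rw [L2] at t; exact t
  have O5 : w (i1+5) = w i1 := by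
    have t : w (i1+5) = !w (i1+4) := eqnot' (hB (i1+4) (by omega) (by omega))
    rw [L4] at t; simpa using t
  have O7 : w (i1+7) = w i1 := by
    have t : w (i1+7) = !w (i1+6) := eqnot' (hB (i1+6) (by omega) (by omega))
    rw [L6] at t; simpa using t
  have O9 : w (i1+9) = !w i1 := by
    have t : w (i1+9) = !w (i1+8) := eqnot' (hB (i1+8) (by omega) (by omega))
    rw [L8] at t; exact t
  have O11 : w (i1+11) = !w i1 := by
    have t : w (i1+11) = !w (i1+10) := eqnot' (hB (i1+10) (by omega) (by omega))
    rw [L10] at t; exact t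
  have O13 : w (i1+13) = w i1 := by
    have t : w (i1+13) = !w (i1+12) := eqnot' (hB (i1+12) (by omega) (by omega))
    rw [L12] at t; simpa using t
  have O15 : w (i1+15) = w i1 := by
    have t : w (i1+15) = !w (i1+14) := eqnot' (hB (i1+14) (by omega) (by omega))
    rw [L14] at t; simpa using t
  refine OV h i1 8 (by omega) ?_
  intro t ht
  interval_cases t
  · show w i1 = w (i1+8); rw [L8]
  · show w (i1+1) = w (i1+9); rw [O1, O9]
  · show w (i1+2) = w (i1+10); rw [L2, L10]
  · show w (i1+3) = w (i1+11); rw [O3, O11]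
  · show w (i1+4) = w (i1+12); rw [L4, L12]
  · show w (i1+5) = w (i1+13); rw [O5, O13]
  · show w (i1+6) = w (i1+14); rw [L6, L14]
  · show w (i1+7) = w (i1+15); rw [O7, O15]
  · show w (i1+8) = w (i1+16); rw [L8, L16]
end

section
/- Let a be the infinite binary word obtained as the limit of the sequence A_0 = 00, A_{n+1} = 0·μ²(A_n) (each A_n is a prefix of A_{n+1}). Then for every n ≥ 0 and every position i with (4^n − 1)/3 ≤ i ≤ (4^{n+1} − 1)/3 − 1, the word a contains a square of length 2·4^{n+1} beginning at position i. In particular, a contains a square beginning at every position. -/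
def A : ℕ → List Bool
  | 0 => [false, false]
  | n + 1 => false :: mu (mu (A n))

/-- the 4-letter block of μ² -/
def gg (b : Bool) : List Bool := [b, !b, !b, b]

lemma mu2_eq_bind (w : List Bool) : mu (mu w) = w.flatMap gg := by
  show ((w.flatMap _).flatMap _) = _
  rw [List.flatMap_assoc]
  congr 1
  funext b
  cases b <;> rfl

lemma gg_len (b : Bool) : (gg b).length = 4 := by cases b <;> rfl

lemma bind_gg_getD (w : List Bool) (k r : ℕ) (hk : k < w.length) (hr : r < 4) :
    (w.flatMap gg).getD (4 * k + r) false = (gg (w.getD k false)).getD r false := by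
  induction w generalizing k with
  | nil => simp at hk
  | cons b t ih =>
    rw [List.flatMap_cons]
    cases k with
    | zero =>
      rw [Nat.mul_zero, Nat.zero_add]
      rw [List.getD_append _ _ _ _ (by rw [gg_len]; exact hr)]
      rfl
    | succ k =>
      have h4 : 4 * (k + 1) + r = (gg b).length + (4 * k + r) := by rw [gg_len]; ring
      rw [h4, List.getD_append_right _ _ _ _ (Nat.le_add_right _ _), Nat.add_sub_cancel_left]
      simp only [List.length_cons] at hk
      exact ih k (by omega)

lemma len_A_succ (n : ℕ) : (A (n + 1)).length = 4 * (A n).length + 1 := by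
  show (false :: mu (mu (A n))).length = _
  rw [mu2_eq_bind, List.length_cons, List.length_flatMap]
  have : ∀ l : List Bool, (l.map (List.length ∘ gg)).sum = 4 * l.length := by
    intro l
    induction l with
    | nil => rfl
    | cons b t ih => simp only [List.map_cons, List.sum_cons, ih, Function.comp, gg_len, List.length_cons]; omega
  have h := this (A n)
  simp only [Function.comp_def] at h
  rw [h]

lemma len_A_ge (n : ℕ) : n + 2 ≤ (A n).length := by
  induction n with
  | zero => rfl
  | succ n ih => rw [len_A_succ]; omega

lemma a_eq (a : ℕ → Bool) (ha : ∀ n, seg a 0 (A n).length = A n) (n k : ℕ)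
    (hk : k < (A n).length) : a k = (A n).getD k false := by
  conv_rhs => rw [← ha n]
  rw [seg, List.getD_eq_getElem _ _ (by simpa using hk)]
  simp

lemma step (a : ℕ → Bool) (ha : ∀ n, seg a 0 (A n).length = A n) (k r : ℕ) (hr : r < 4) :
    a (4 * k + 1 + r) = (gg (a k)).getD r false := by
  have hk : k < (A k).length := lt_of_lt_of_le (by omega) (len_A_ge k)
  have h1 : 4 * k + 1 + r < (A (k + 1)).length := by rw [len_A_succ]; omega
  rw [a_eq a ha (k + 1) _ h1, a_eq a ha k k hk]
  show (false :: mu (mu (A k))).getD (4 * k + 1 + r) false = _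
  have : 4 * k + 1 + r = (4 * k + r) + 1 := by ring
  rw [this]
  show (mu (mu (A k))).getD (4 * k + r) false = _
  rw [mu2_eq_bind, bind_gg_getD _ _ _ hk hr]

lemma c_succ (n : ℕ) : (4 ^ (n + 1) - 1) / 3 = 4 * ((4 ^ n - 1) / 3) + 1 := by
  have h1 : 4 ^ n % 3 = 1 := by
    rw [Nat.pow_mod]; simp
  have h2 : 4 ^ (n + 1) = 4 * 4 ^ n := by rw [pow_succ]; ring
  have h3 : 1 ≤ 4 ^ n := Nat.one_le_pow _ _ (by norm_num)
  omega

lemma key (a : ℕ → Bool) (ha : ∀ n, seg a 0 (A n).length = A n) :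
    ∀ n p : ℕ, (4 ^ n - 1) / 3 ≤ p → p < (4 ^ (n + 1) - 1) / 3 + 4 ^ (n + 1) →
      a p = a (p + 4 ^ (n + 1)) := by
  intro n
  induction n with
  | zero =>
    intro p _ hp2
    norm_num at hp2
    have h1 : a p = (A 2).getD p false :=
      a_eq a ha 2 p (by rw [len_A_succ, len_A_succ]; show p < 4*(4*2+1)+1; omega)
    have h2 : a (p + 4 ^ 1) = (A 2).getD (p + 4 ^ 1) false :=
      a_eq a ha 2 _ (by rw [len_A_succ, len_A_succ]; show p + 4^1 < 4*(4*2+1)+1; omega)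
    rw [h1, h2]
    interval_cases p <;> decide
  | succ n ih =>
    intro p hp1 hp2
    rw [c_succ] at hp1
    rw [c_succ, c_succ] at hp2
    set cn := (4 ^ n - 1) / 3 with hcn
    have hp0 : 1 ≤ p := by omega
    obtain ⟨k, r, hr, hpkr⟩ : ∃ k r, r < 4 ∧ p = 4 * k + 1 + r :=
      ⟨(p - 1) / 4, (p - 1) % 4, Nat.mod_lt _ (by norm_num), by omega⟩
    have hP2 : (4 : ℕ) ^ (n + 2) = 4 * 4 ^ (n + 1) := by rw [pow_succ]; ring
    have e1 : a p = (gg (a k)).getD r false := by rw [hpkr]; exact step a ha k r hr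
    have e2 : a (p + 4 ^ (n + 2)) = (gg (a (k + 4 ^ (n + 1)))).getD r false := by
      have : p + 4 ^ (n + 2) = 4 * (k + 4 ^ (n + 1)) + 1 + r := by rw [hP2]; omega
      rw [this]; exact step a ha _ r hr
    have hk1 : cn ≤ k := by omega
    have hk2 : k < 4 * cn + 1 + 4 ^ (n + 1) := by omega
    have := ih k hk1 (by rw [c_succ, ← hcn]; exact hk2)
    rw [e1, e2, this]

theorem stmt12 (a : ℕ → Bool) (ha : ∀ n, seg a 0 (A n).length = A n) :
    (∀ n i : ℕ, (4 ^ n - 1) / 3 ≤ i → i < (4 ^ (n + 1) - 1) / 3 →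
      SqLenAt a i (4 ^ (n + 1))) ∧
    (∀ i, SqAt a i) := by
  have main : ∀ n i : ℕ, (4 ^ n - 1) / 3 ≤ i → i < (4 ^ (n + 1) - 1) / 3 →
      SqLenAt a i (4 ^ (n + 1)) := by
    intro n i h1 h2 j hj
    have := key a ha n (i + j) (le_trans h1 (Nat.le_add_right _ _)) (by omega)
    rw [this]; congr 1; ring
  refine ⟨main, fun i => ?_⟩
  have hex : ∃ m, i < (4 ^ (m + 1) - 1) / 3 := by
    refine ⟨i, ?_⟩
    have : ∀ m : ℕ, m ≤ (4 ^ m - 1) / 3 := by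
      intro m
      induction m with
      | zero => simp
      | succ m ih => rw [c_succ]; omega
    have := this (i + 1)
    omega
  classical
  let n := Nat.find hex
  have hn2 : i < (4 ^ (n + 1) - 1) / 3 := Nat.find_spec hex
  have hn1 : (4 ^ n - 1) / 3 ≤ i := by
    rcases Nat.eq_zero_or_pos n with h | h
    · simp [h]
    · have := Nat.find_min hex (m := n - 1) (by omega)
      have hrw : n - 1 + 1 = n := by omega
      rw [hrw] at this
      omega
  exact ⟨4 ^ (n + 1), pow_pos (by norm_num) _, main n i hn1 hn2⟩
end

section
/- The Thue–Morse word t does not begin with a square; i.e., there is no nonempty word x such that xx is a prefix of t. -/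
lemma mu_cons_s14 (b : Bool) (w : List Bool) : mu (b :: w) = b :: (!b) :: mu w := by
  cases b <;> simp [mu]

lemma mu_getElem?_even (w : List Bool) (i : ℕ) : (mu w)[2*i]? = w[i]? := by
  induction w generalizing i with
  | nil => simp [mu]
  | cons b w ih =>
    rw [mu_cons_s14]
    cases i with
    | zero => simp
    | succ i =>
      have h2 : 2*(i+1) = 2*i+1+1 := by ring
      rw [h2]
      simpa using ih i

lemma mu_getElem?_odd (w : List Bool) (i : ℕ) : (mu w)[2*i+1]? = (w[i]?).map (fun b => !b) := by
  induction w generalizing i with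
  | nil => simp [mu]
  | cons b w ih =>
    rw [mu_cons_s14]
    cases i with
    | zero => simp
    | succ i =>
      have h2 : 2*(i+1)+1 = (2*i+1)+1+1 := by ring
      rw [h2]
      simpa using ih i


section
variable (t : ℕ → Bool)
    (ht : ∀ k : ℕ, seg t 0 (mu^[k] [false]).length = mu^[k] [false])

include ht

lemma t_eq (k i : ℕ) (h : i < (mu^[k] [false]).length) :
    (mu^[k] [false])[i]? = some (t i) := by
  conv_lhs => rw [← ht k]
  simp [seg, List.getElem?_map, List.getElem?_range, h]

lemma len_le (n : ℕ) : n < (mu^[n] [false]).length := by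
  induction n with
  | zero => simp
  | succ n ih =>
    rw [Function.iterate_succ_apply']
    have : ∀ w : List Bool, (mu w).length = 2 * w.length := by
      intro w
      induction w with
      | nil => rfl
      | cons b w ihw => rw [mu_cons_s14]; simp [ihw]; omega
    rw [this]; omega

lemma t_even (n : ℕ) : t (2*n) = t n := by
  have h1 := t_eq t ht n n (len_le t ht n)
  have h2 : 2*n < (mu^[n+1] [false]).length := by
    have := len_le t ht (n+1)
    rw [Function.iterate_succ_apply'] at *
    have hh : (mu (mu^[n] [false])).length = 2 * (mu^[n] [false]).length := by
      generalize mu^[n] [false] = w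
      induction w with
      | nil => rfl
      | cons b w ihw => rw [mu_cons_s14]; simp [ihw]; omega
    have := len_le t ht n
    omega
  have h3 := t_eq t ht (n+1) (2*n) h2
  rw [Function.iterate_succ_apply', mu_getElem?_even] at h3
  rw [h1] at h3
  exact (Option.some.inj h3).symm

lemma t_odd (n : ℕ) : t (2*n+1) = !t n := by
  have h1 := t_eq t ht n n (len_le t ht n)
  have h2 : 2*n+1 < (mu^[n+1] [false]).length := by
    have := len_le t ht (n+1)
    rw [Function.iterate_succ_apply'] at *
    have hh : (mu (mu^[n] [false])).length = 2 * (mu^[n] [false]).length := by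
      generalize mu^[n] [false] = w
      induction w with
      | nil => rfl
      | cons b w ihw => rw [mu_cons_s14]; simp [ihw]; omega
    have := len_le t ht n
    omega
  have h3 := t_eq t ht (n+1) (2*n+1) h2
  rw [Function.iterate_succ_apply', mu_getElem?_odd] at h3
  rw [h1] at h3
  simp at h3
  rw [h3]; simp

end


theorem stmt14 (t : ℕ → Bool)
    (ht : ∀ k : ℕ, seg t 0 (mu^[k] [false]).length = mu^[k] [false]) :
    ¬ SqAt t 0 := by
  have t0 : t 0 = false := by
    have := t_eq t ht 0 0 (by simp)
    simp at this
    exact this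
  have main : ∀ m, 0 < m → ¬ SqLenAt t 0 m := by
    intro m
    induction m using Nat.strong_induction_on with
    | _ m ih =>
      intro hm hsq
      simp only [SqLenAt, Nat.zero_add] at hsq
      rcases Nat.even_or_odd m with ⟨a, ha⟩ | ⟨a, ha⟩
      · -- even: m = a + a
        have ha0 : 0 < a := by omega
        refine ih a (by omega) ha0 ?_
        intro j hj
        have := hsq (2*j) (by omega)
        have e1 : t (2*j) = t j := t_even t ht j
        have e2 : m + 2*j = 2*(a+j) := by omega
        rw [e1, e2, t_even t ht] at this
        simpa [Nat.add_comm] using this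
      · -- odd: m = 2a+1
        rcases Nat.eq_or_lt_of_le (Nat.one_le_iff_ne_zero.mpr (by omega) : 1 ≤ m) with h1 | h3
        · -- m = 1
          have := hsq 0 (by omega)
          rw [← h1] at this
          have : t 0 = t 1 := by simpa using this
          rw [t0] at this
          have h1' := t_odd t ht 0
          rw [t0] at h1'
          simp at h1'
          rw [h1'] at this
          exact (by simp at this)
        · -- m ≥ 3 (m odd, m > 1 so m ≥ 3)
          have hm3 : 3 ≤ m := by omega
          have e1 := hsq 1 (by omega)
          have e2 := hsq 2 (by omega)
          have hm1 : m + 1 = 2*(a+1) := by omega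
          have hm2 : m + 2 = 2*(a+1)+1 := by omega
          rw [hm1, t_even t ht] at e1
          rw [hm2, t_odd t ht] at e2
          have e3 : t 2 = t 1 := by
            have := t_even t ht 1
            simpa using this
          rw [e3, e1] at e2
          exact (by simp at e2)
  rintro ⟨m, hm, hsq⟩
  exact main m hm hsq
end
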